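/- Let n ≥ 1 and for 0 ≤ i ≤ 2n-2 define S_{2n}(i) = (t^((2n-i)(2n-1)-i) - t^((2n-i)(2n-1)-2i-1)) · (t^(2n-1) + t^(2n-2) + ⋯ + 1). Then for all 0 ≤ ℓ ≤ 2n-2, Σ_{i=0}^{ℓ} S_{2n}(i) = Σ_{k=2n-ℓ-1}^{2n-1} t^{k(2n+1)} − Σ_{m=ℓ+1}^{2ℓ+1} t^{(2n-ℓ)(2n-1)-m}. -/

import Mathlib

open Polynomial Finset

private lemma pow_mul_geom (a N : ℕ) :
    (X : ℤ[X]) ^ a * ∑ k ∈ range N, (X : ℤ[X]) ^ k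
      = ∑ k ∈ range N, (X : ℤ[X]) ^ (a + k) := by
  rw [Finset.mul_sum]; simp [pow_add]

private lemma shifted_diff (b d N : ℕ) (hd : d ≤ N) :
    ((X : ℤ[X]) ^ (b + d) - (X : ℤ[X]) ^ b) * ∑ k ∈ range N, (X : ℤ[X]) ^ k
      = ∑ j ∈ Ico N (N + d), (X : ℤ[X]) ^ (b + j)
        - ∑ j ∈ range d, (X : ℤ[X]) ^ (b + j) := by
  rw [sub_mul, pow_mul_geom, pow_mul_geom]
  have h1 : ∑ k ∈ range N, (X : ℤ[X]) ^ (b + d + k)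
      = ∑ j ∈ Ico d (N + d), (X : ℤ[X]) ^ (b + j) := by
    rw [Finset.sum_Ico_eq_sum_range]
    apply Finset.sum_congr (by congr 1; omega)
    intro k _; congr 1; omega
  rw [h1]
  have h2 : ∑ j ∈ Ico d N, (X : ℤ[X]) ^ (b + j) + ∑ j ∈ Ico N (N + d), (X : ℤ[X]) ^ (b + j)
      = ∑ j ∈ Ico d (N + d), (X : ℤ[X]) ^ (b + j) :=
    Finset.sum_Ico_consecutive _ hd (by omega)
  have h3 : ∑ j ∈ Ico 0 d, (X : ℤ[X]) ^ (b + j) + ∑ j ∈ Ico d N, (X : ℤ[X]) ^ (b + j)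
      = ∑ j ∈ Ico 0 N, (X : ℤ[X]) ^ (b + j) :=
    Finset.sum_Ico_consecutive _ (by omega) hd
  rw [← h2, Finset.range_eq_Ico, ← h3]
  rw [Finset.range_eq_Ico]; abel

private lemma sum_Icc_pow (c p q : ℕ) (hpq : p ≤ q) (hq : q ≤ c) :
    ∑ m ∈ Icc p q, (X : ℤ[X]) ^ (c - m)
      = ∑ j ∈ range (q + 1 - p), (X : ℤ[X]) ^ (c - q + j) := by
  rw [← Finset.Ico_add_one_right_eq_Icc, Finset.sum_Ico_eq_sum_range]
  rw [← Finset.sum_range_reflect (fun j => (X : ℤ[X]) ^ (c - q + j))]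
  apply Finset.sum_congr rfl
  intro j hj
  simp only [Finset.mem_range] at hj
  congr 1
  omega

private lemma aux (N ℓ : ℕ) (hN : 2 ≤ N) (hℓ : ℓ + 2 ≤ N) :
    (∑ i ∈ Finset.range (ℓ + 1),
        ((X : ℤ[X]) ^ ((N - i) * (N - 1) - i)
          - (X : ℤ[X]) ^ ((N - i) * (N - 1) - (2 * i + 1))) *
          (∑ k ∈ Finset.range N, (X : ℤ[X]) ^ k)) =
      (∑ k ∈ Finset.Icc (N - ℓ - 1) (N - 1), (X : ℤ[X]) ^ (k * (N + 1)))
        - ∑ m ∈ Finset.Icc (ℓ + 1) (2 * ℓ + 1),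
            (X : ℤ[X]) ^ ((N - ℓ) * (N - 1) - m) := by
  induction ℓ with
  | zero =>
      simp only [Finset.sum_range_one, Nat.sub_zero, Nat.mul_zero, Nat.zero_add, mul_zero,
        zero_add, Nat.mul_one]
      rw [Finset.Icc_self, Finset.Icc_self, Finset.sum_singleton, Finset.sum_singleton]
      have hb : 1 ≤ N * (N - 1) := by
        have := Nat.mul_le_mul (show 2 ≤ N from hN) (show 1 ≤ N - 1 by omega)
        omega
      have e1 : N * (N - 1) = (N * (N - 1) - 1) + 1 := by
        revert hb; generalize N * (N - 1) = P; intro hb; omega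
      have e2 : N * (N - 1) - (2 * 0 + 1) = N * (N - 1) - 1 := by norm_num
      rw [e2]; nth_rewrite 1 [e1]; rw [shifted_diff _ _ _ (by omega : 1 ≤ N)]
      rw [show Ico N (N + 1) = {N} from by rw [Finset.Ico_add_one_right_eq_Icc, Finset.Icc_self]]
      rw [Finset.sum_singleton, Finset.sum_range_one]
      have hq : (N - 1) * (N + 1) + 1 = N * (N - 1) + N := by
        zify [show 1 ≤ N by omega]; ring
      congr 2
      · revert hb hq
        generalize N * (N - 1) = P
        generalize (N - 1) * (N + 1) = Q
        intro hb hq; omega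
  | succ ℓ ih =>
      have hℓ' : ℓ + 2 ≤ N := by omega
      rw [Finset.sum_range_succ, ih hℓ']
      have hC : 2 * (N - 1) ≤ (N - (ℓ + 1)) * (N - 1) :=
        Nat.mul_le_mul_right _ (by omega)
      have hC' : (N - ℓ) * (N - 1) = (N - (ℓ + 1)) * (N - 1) + (N - 1) := by
        rw [show N - ℓ = (N - (ℓ + 1)) + 1 by omega, add_mul, one_mul]
      have hD : (N - (ℓ + 1) - 1) * (N + 1) + (2 * (ℓ + 1) + 1)
          = (N - (ℓ + 1)) * (N - 1) + N := by
        zify [show ℓ + 1 ≤ N by omega, show 1 ≤ N - (ℓ + 1) by omega, show 1 ≤ N by omega]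
        ring
      have e1 : (N - (ℓ + 1)) * (N - 1) - (ℓ + 1)
          = ((N - (ℓ + 1)) * (N - 1) - (2 * (ℓ + 1) + 1)) + (ℓ + 2) := by
        revert hC; generalize (N - (ℓ + 1)) * (N - 1) = C; intro hC; omega
      rw [e1, shifted_diff ((N - (ℓ + 1)) * (N - 1) - (2 * (ℓ + 1) + 1)) (ℓ + 2) N
        (show ℓ + 2 ≤ N by omega)]
      have h2 : ∑ j ∈ Ico N (N + (ℓ + 2)),
            (X : ℤ[X]) ^ ((N - (ℓ + 1)) * (N - 1) - (2 * (ℓ + 1) + 1) + j)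
          = (X : ℤ[X]) ^ ((N - (ℓ + 1) - 1) * (N + 1))
            + ∑ m ∈ Icc (ℓ + 1) (2 * ℓ + 1), (X : ℤ[X]) ^ ((N - ℓ) * (N - 1) - m) := by
        rw [Finset.sum_Ico_eq_sum_range, show N + (ℓ + 2) - N = ℓ + 2 by omega,
          Finset.sum_range_succ'
            (fun k => (X : ℤ[X]) ^ ((N - (ℓ + 1)) * (N - 1) - (2 * (ℓ + 1) + 1) + (N + k)))
            (ℓ + 1)]
        have hq : 2 * ℓ + 1 ≤ (N - ℓ) * (N - 1) := by
          revert hC hC'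
          generalize (N - (ℓ + 1)) * (N - 1) = C
          generalize (N - ℓ) * (N - 1) = E
          intro hC hC'; omega
        rw [sum_Icc_pow _ _ _ (by omega) hq, show 2 * ℓ + 1 + 1 - (ℓ + 1) = ℓ + 1 by omega,
          add_comm]
        congr 1
        · congr 1
          revert hC hC' hD
          generalize (N - (ℓ + 1)) * (N - 1) = C
          generalize (N - ℓ) * (N - 1) = E
          generalize (N - (ℓ + 1) - 1) * (N + 1) = D
          intro hC hC' hD; omega
        · apply Finset.sum_congr rfl
          intro j _
          congr 1
          revert hC hC'
          generalize (N - (ℓ + 1)) * (N - 1) = C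
          generalize (N - ℓ) * (N - 1) = E
          intro hC hC'; omega
      have h3 : ∑ j ∈ range (ℓ + 2),
            (X : ℤ[X]) ^ ((N - (ℓ + 1)) * (N - 1) - (2 * (ℓ + 1) + 1) + j)
          = ∑ m ∈ Icc (ℓ + 1 + 1) (2 * (ℓ + 1) + 1),
              (X : ℤ[X]) ^ ((N - (ℓ + 1)) * (N - 1) - m) := by
        have hq : 2 * (ℓ + 1) + 1 ≤ (N - (ℓ + 1)) * (N - 1) := by
          revert hC; generalize (N - (ℓ + 1)) * (N - 1) = C; intro hC; omega
        rw [sum_Icc_pow _ _ _ (by omega) hq,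
          show 2 * (ℓ + 1) + 1 + 1 - (ℓ + 1 + 1) = ℓ + 2 by omega]
      have h1 : ∑ k ∈ Icc (N - (ℓ + 1) - 1) (N - 1), (X : ℤ[X]) ^ (k * (N + 1))
          = (X : ℤ[X]) ^ ((N - (ℓ + 1) - 1) * (N + 1))
            + ∑ k ∈ Icc (N - ℓ - 1) (N - 1), (X : ℤ[X]) ^ (k * (N + 1)) := by
        rw [show N - ℓ - 1 = (N - (ℓ + 1) - 1) + 1 by omega, Finset.Icc_add_one_left_eq_Ioc,
          ← Finset.Ioc_insert_left (by omega : N - (ℓ + 1) - 1 ≤ N - 1),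
          Finset.sum_insert (by simp)]
      rw [h2, h3, h1]
      abel

/-- The inductive summation identity for the partial sums `S_{2n}(i)` used in the
computation of the Alexander polynomial of `T_{2n,2n+1}`. -/
theorem partial_sums_S2n (n ℓ : ℕ) (hn : 1 ≤ n) (hℓ : ℓ ≤ 2 * n - 2) :
    (∑ i ∈ Finset.range (ℓ + 1),
        ((X : ℤ[X]) ^ ((2 * n - i) * (2 * n - 1) - i)
          - (X : ℤ[X]) ^ ((2 * n - i) * (2 * n - 1) - (2 * i + 1))) *
          (∑ k ∈ Finset.range (2 * n), (X : ℤ[X]) ^ k)) =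
      (∑ k ∈ Finset.Icc (2 * n - ℓ - 1) (2 * n - 1), (X : ℤ[X]) ^ (k * (2 * n + 1)))
        - ∑ m ∈ Finset.Icc (ℓ + 1) (2 * ℓ + 1),
            (X : ℤ[X]) ^ ((2 * n - ℓ) * (2 * n - 1) - m) := by
  exact aux (2 * n) ℓ (by omega) (by omega)
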